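/- (δ-passivity of cost-benefit rationalizable dynamics) Suppose Assumptions Q1, A1-i and A1-ii hold and the regularity condition holds at (a, π) for every a ∈ 𝒜. Fix x ∈ Δ^𝒜, let z_a be the unique exact-rate transition vector for a at π, set Δx := Σ_{a∈𝒜} x_a z_a, and fix any Δπ ∈ ℝ^𝒜. Then the function t ↦ G(x + tΔx)[π + tΔπ] has a right derivative at t = 0 equal to H(x)[π] + Δx · Δπ. -/

import Mathlib

open MeasureTheory Finset
open scoped Classical

/-- The maximal payoff among actions in `S`. -/
noncomputable def piStar {A : Type*} (π : A → ℝ) (S : Finset A) : ℝ :=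
  if h : S.Nonempty then S.sup' h π else 0

/-- The set of optimal actions in `S`: `b_*[π](S)`. -/
noncomputable def bStar {A : Type*} (π : A → ℝ) (S : Finset A) : Finset A :=
  S.filter (fun b => π b = piStar π S)

/-- `Q(q) = μ_Q((-∞, q])`. -/
noncomputable def Qfun (μQ : Measure ℝ) (q : ℝ) : ℝ := (μQ (Set.Iic q)).toReal

/-- The individual ex-ante first-order net gain `g_{a*}[π]`. -/
noncomputable def gain {A : Type*} [Fintype A] [DecidableEq A]
    (P : A → Finset A → ℝ) (μQ : Measure ℝ) (π : A → ℝ) (a : A) : ℝ :=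
  ∑ A' ∈ (Finset.univ.erase a).powerset,
    P a A' * ∫ q, max (piStar π A' - π a - q) 0 ∂μQ

/-- `g_{**}[π](S) = min_{b ∈ S} g_{b*}[π]`. -/
noncomputable def gainMin {A : Type*} [Fintype A] [DecidableEq A]
    (P : A → Finset A → ℝ) (μQ : Measure ℝ) (π : A → ℝ) (S : Finset A) : ℝ :=
  if h : S.Nonempty then S.inf' h (fun b => gain P μQ π b) else 0

/-- The individual ex-ante second-order net gain `h_{a*}[π]`. -/
noncomputable def gain2 {A : Type*} [Fintype A] [DecidableEq A]
    (P : A → Finset A → ℝ) (μQ : Measure ℝ) (π : A → ℝ) (a : A) : ℝ :=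
  ∑ A' ∈ (Finset.univ.erase a).powerset,
    P a A' * Qfun μQ (piStar π A' - π a) * (gainMin P μQ π A' - gain P μQ π a)

/-- The aggregate first-order gain `G(x)[π] = Σ_a x_a g_{a*}[π]`. -/
noncomputable def Gagg {A : Type*} [Fintype A] [DecidableEq A]
    (P : A → Finset A → ℝ) (μQ : Measure ℝ) (x π : A → ℝ) : ℝ :=
  ∑ a : A, x a * gain P μQ π a

/-- The aggregate second-order gain `H(x)[π] = Σ_a x_a h_{a*}[π]`. -/
noncomputable def Hagg {A : Type*} [Fintype A] [DecidableEq A]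
    (P : A → Finset A → ℝ) (μQ : Measure ℝ) (x π : A → ℝ) : ℝ :=
  ∑ a : A, x a * gain2 P μQ π a

/-- `Δx = Σ_a x_a z_a`, where `z_a` is the exact-rate transition vector for `a` at `π`
whose target is the optimal available action chosen by the selector `sel`. -/
noncomputable def deltaX {A : Type*} [Fintype A] [DecidableEq A]
    (P : A → Finset A → ℝ) (μQ : Measure ℝ) (π x : A → ℝ)
    (sel : A → Finset A → A) : A → ℝ :=
  fun b => ∑ a : A, x a *
    (∑ A' ∈ (Finset.univ.erase a).powerset,
      P a A' * Qfun μQ (piStar π A' - π a) *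
        ((if b = sel a A' then (1 : ℝ) else 0) - (if b = a then (1 : ℝ) else 0)))

-- ===== auxiliary lemmas =====







lemma mu_neg_null (μQ : Measure ℝ) [IsProbabilityMeasure μQ]
    (hQ1a : ∀ q : ℝ, q < 0 → Qfun μQ q = 0) : μQ (Set.Iio 0) = 0 := by
  have h : ∀ q : ℝ, q < 0 → μQ (Set.Iic q) = 0 := by
    intro q hq
    have := hQ1a q hq
    unfold Qfun at this
    exact (ENNReal.toReal_eq_zero_iff _).mp this |>.resolve_right (measure_ne_top μQ _)
  have hset : Set.Iio (0:ℝ) = ⋃ n : ℕ, Set.Iic (-(1:ℝ)/(n+1)) := by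
    ext q
    simp only [Set.mem_Iio, Set.mem_iUnion, Set.mem_Iic]
    constructor
    · intro hq
      obtain ⟨n, hn⟩ := exists_nat_one_div_lt (neg_pos.mpr hq)
      refine ⟨n, ?_⟩
      have h2 : -(1:ℝ)/(n+1) = -((1:ℝ)/(n+1)) := neg_div _ _
      rw [h2]; linarith
    · intro ⟨n, hn⟩
      have h2 : -(1:ℝ)/(n+1) = -((1:ℝ)/(n+1)) := neg_div _ _
      have h3 : (0:ℝ) < (1:ℝ)/(n+1) := by positivity
      rw [h2] at hn; linarith
  rw [hset]
  refine measure_iUnion_null fun n => h _ ?_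
  have h2 : -(1:ℝ)/(n+1) = -((1:ℝ)/(n+1)) := neg_div _ _
  have h3 : (0:ℝ) < (1:ℝ)/(n+1) := by positivity
  rw [h2]; linarith

lemma ae_nonneg (μQ : Measure ℝ) [IsProbabilityMeasure μQ]
    (hQ1a : ∀ q : ℝ, q < 0 → Qfun μQ q = 0) : ∀ᵐ q ∂μQ, 0 ≤ q := by
  have := mu_neg_null μQ hQ1a
  rw [ae_iff]
  convert this using 2
  ext q; simp [Set.mem_Iio, not_le]

lemma int_max (μQ : Measure ℝ) [IsProbabilityMeasure μQ]
    (hQ1a : ∀ q : ℝ, q < 0 → Qfun μQ q = 0) (m : ℝ) :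
    Integrable (fun q => max (m - q) 0) μQ := by
  refine Integrable.mono' (integrable_const (max m 0)) ?_ ?_
  · exact ((continuous_const.sub continuous_id).max continuous_const).aestronglyMeasurable
  · filter_upwards [ae_nonneg μQ hQ1a] with q hq
    rw [Real.norm_eq_abs, abs_of_nonneg (le_max_right _ _)]
    exact max_le_max (by linarith) le_rfl

section
variable (μQ : Measure ℝ) [IsProbabilityMeasure μQ]

-- numerator bound: |J y - J c - (y-c) Q c| ≤ |y-c| * μ(Ioc (min y c) (max y c))
lemma J_num_bound (hint : ∀ m : ℝ, Integrable (fun q => max (m - q) 0) μQ) (c y : ℝ) :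
    |(∫ q, max (y - q) 0 ∂μQ) - (∫ q, max (c - q) 0 ∂μQ) - (y - c) * (μQ (Set.Iic c)).toReal|
      ≤ |y - c| * (μQ (Set.Ioc (min y c) (max y c))).toReal := by
  rcases le_total c y with hcy | hyc
  · -- c ≤ y
    have h1 : ∀ q : ℝ, (y - c) * Set.indicator (Set.Iic c) (1 : ℝ → ℝ) q
        ≤ max (y - q) 0 - max (c - q) 0 := by
      intro q
      by_cases hq : q ≤ c
      · rw [Set.indicator_of_mem (Set.mem_Iic.mpr hq), Pi.one_apply]
        rw [max_eq_left (by linarith : (0:ℝ) ≤ y - q), max_eq_left (by linarith : (0:ℝ) ≤ c - q)]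
        ring_nf; simp
      · rw [Set.indicator_of_notMem (by simpa using hq)]
        simp only [mul_zero]
        have : max (c - q) 0 ≤ max (y - q) 0 := max_le_max (by linarith) le_rfl
        linarith
    have h2 : ∀ q : ℝ, max (y - q) 0 - max (c - q) 0
        ≤ (y - c) * Set.indicator (Set.Iic y) (1 : ℝ → ℝ) q := by
      intro q
      by_cases hq : q ≤ y
      · rw [Set.indicator_of_mem (Set.mem_Iic.mpr hq), Pi.one_apply]
        have hb : max (c - q) 0 ≥ c - q := le_max_left _ _
        have hb0 : max (c - q) 0 ≥ 0 := le_max_right _ _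
        have : max (y - q) 0 = y - q := max_eq_left (by linarith)
        rw [this]; rcases le_total q c with h|h <;> nlinarith [le_max_left (c-q) (0:ℝ)]
      · push_neg at hq
        rw [Set.indicator_of_notMem (by simpa using hq.not_ge)]
        rw [max_eq_right (by linarith : y - q ≤ 0), max_eq_right (by linarith : c - q ≤ 0)]
        simp
    have hiInd : ∀ s : Set ℝ, MeasurableSet s →
        Integrable (fun q => (y - c) * Set.indicator s (1 : ℝ → ℝ) q) μQ := by
      intro s hs
      exact (((integrable_indicator_iff hs).mpr
        (integrableOn_const (measure_ne_top μQ s))).const_mul _)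
    have hIc := hiInd _ (measurableSet_Iic (a := c))
    have hIy := hiInd _ (measurableSet_Iic (a := y))
    have hsub : Integrable (fun q => max (y - q) 0 - max (c - q) 0) μQ :=
      (hint y).sub (hint c)
    have e1 : ∫ q, (y - c) * Set.indicator (Set.Iic c) (1 : ℝ → ℝ) q ∂μQ
        = (y - c) * (μQ (Set.Iic c)).toReal := by
      rw [integral_const_mul, integral_indicator_one (measurableSet_Iic)]; rfl
    have e2 : ∫ q, (y - c) * Set.indicator (Set.Iic y) (1 : ℝ → ℝ) q ∂μQ
        = (y - c) * (μQ (Set.Iic y)).toReal := by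
      rw [integral_const_mul, integral_indicator_one (measurableSet_Iic)]; rfl
    have hlow := integral_mono hIc hsub h1
    have hhigh := integral_mono hsub hIy h2
    rw [e1] at hlow; rw [e2] at hhigh
    rw [integral_sub (hint y) (hint c)] at hlow hhigh
    have hQ : (μQ (Set.Iic y)).toReal = (μQ (Set.Iic c)).toReal
        + (μQ (Set.Ioc c y)).toReal := by
      rw [← ENNReal.toReal_add (measure_ne_top _ _) (measure_ne_top _ _),
        ← measure_union (Set.Iic_disjoint_Ioc le_rfl) measurableSet_Ioc, Set.Iic_union_Ioc_eq_Iic hcy]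
    rw [min_eq_right hcy, max_eq_left hcy]
    rw [abs_of_nonneg (by linarith), abs_of_nonneg (by linarith : (0:ℝ) ≤ y - c)]
    nlinarith [ENNReal.toReal_nonneg (a := μQ (Set.Ioc c y))]
  · -- y ≤ c : symmetric, swap roles
    have h1 : ∀ q : ℝ, (c - y) * Set.indicator (Set.Iic y) (1 : ℝ → ℝ) q
        ≤ max (c - q) 0 - max (y - q) 0 := by
      intro q
      by_cases hq : q ≤ y
      · rw [Set.indicator_of_mem (Set.mem_Iic.mpr hq), Pi.one_apply]
        rw [max_eq_left (by linarith : (0:ℝ) ≤ y - q), max_eq_left (by linarith : (0:ℝ) ≤ c - q)]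
        ring_nf; simp
      · rw [Set.indicator_of_notMem (by simpa using hq)]
        simp only [mul_zero]
        have : max (y - q) 0 ≤ max (c - q) 0 := max_le_max (by linarith) le_rfl
        linarith
    have h2 : ∀ q : ℝ, max (c - q) 0 - max (y - q) 0
        ≤ (c - y) * Set.indicator (Set.Iic c) (1 : ℝ → ℝ) q := by
      intro q
      by_cases hq : q ≤ c
      · rw [Set.indicator_of_mem (Set.mem_Iic.mpr hq), Pi.one_apply]
        have : max (c - q) 0 = c - q := max_eq_left (by linarith)
        rw [this]; rcases le_total q y with h|h
        · rw [max_eq_left (by linarith : (0:ℝ) ≤ y - q)]; nlinarith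
        · rw [max_eq_right (by linarith : y - q ≤ 0)]; nlinarith
      · push_neg at hq
        rw [Set.indicator_of_notMem (by simpa using hq.not_ge)]
        rw [max_eq_right (by linarith : y - q ≤ 0), max_eq_right (by linarith : c - q ≤ 0)]
        simp
    have hiInd : ∀ s : Set ℝ, MeasurableSet s →
        Integrable (fun q => (c - y) * Set.indicator s (1 : ℝ → ℝ) q) μQ := by
      intro s hs
      exact (((integrable_indicator_iff hs).mpr
        (integrableOn_const (measure_ne_top μQ s))).const_mul _)
    have hIc := hiInd _ (measurableSet_Iic (a := c))
    have hIy := hiInd _ (measurableSet_Iic (a := y))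
    have hsub : Integrable (fun q => max (c - q) 0 - max (y - q) 0) μQ :=
      (hint c).sub (hint y)
    have e1 : ∫ q, (c - y) * Set.indicator (Set.Iic y) (1 : ℝ → ℝ) q ∂μQ
        = (c - y) * (μQ (Set.Iic y)).toReal := by
      rw [integral_const_mul, integral_indicator_one (measurableSet_Iic)]; rfl
    have e2 : ∫ q, (c - y) * Set.indicator (Set.Iic c) (1 : ℝ → ℝ) q ∂μQ
        = (c - y) * (μQ (Set.Iic c)).toReal := by
      rw [integral_const_mul, integral_indicator_one (measurableSet_Iic)]; rfl
    have hlow := integral_mono hIy hsub h1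
    have hhigh := integral_mono hsub hIc h2
    rw [e1] at hlow; rw [e2] at hhigh
    rw [integral_sub (hint c) (hint y)] at hlow hhigh
    have hQ : (μQ (Set.Iic c)).toReal = (μQ (Set.Iic y)).toReal
        + (μQ (Set.Ioc y c)).toReal := by
      rw [← ENNReal.toReal_add (measure_ne_top _ _) (measure_ne_top _ _),
        ← measure_union (Set.Iic_disjoint_Ioc le_rfl) measurableSet_Ioc, Set.Iic_union_Ioc_eq_Iic hyc]
    rw [min_eq_left hyc, max_eq_right hyc]
    rw [abs_of_nonneg (by linarith), abs_of_nonpos (by linarith : y - c ≤ 0)]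
    nlinarith [ENNReal.toReal_nonneg (a := μQ (Set.Ioc y c))]

end

section
variable (μQ : Measure ℝ) [IsProbabilityMeasure μQ]

lemma tendsto_B (c : ℝ) (hc : μQ {c} = 0) :
    Filter.Tendsto (fun y => (μQ (Set.Ioc (min y c) (max y c))).toReal) (nhds c) (nhds 0) := by
  have hiInter : (⋂ n : ℕ, Set.Ioc (c - 1/(n+1)) (c + 1/(n+1))) = {c} := by
    ext q
    simp only [Set.mem_iInter, Set.mem_Ioc, Set.mem_singleton_iff]
    constructor
    · intro h
      have hle : q ≤ c := by
        by_contra hq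
        push_neg at hq
        obtain ⟨n, hn⟩ := exists_nat_one_div_lt (sub_pos.mpr hq)
        exact absurd ((h n).2) (by push_neg; linarith)
      have hge : c ≤ q := by
        by_contra hq
        push_neg at hq
        obtain ⟨n, hn⟩ := exists_nat_one_div_lt (sub_pos.mpr hq)
        exact absurd ((h n).1) (by push_neg; linarith)
      linarith
    · intro h; subst h
      intro n
      have : (0:ℝ) < 1/(n+1) := by positivity
      constructor <;> linarith
  have key : Filter.Tendsto (fun n : ℕ => μQ (Set.Ioc (c - 1/(n+1)) (c + 1/(n+1))))
      Filter.atTop (nhds 0) := by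
    have := tendsto_measure_iInter_atTop (μ := μQ)
      (s := fun n : ℕ => Set.Ioc (c - 1/(n+1)) (c + 1/(n+1)))
      (fun n => measurableSet_Ioc.nullMeasurableSet)
      (fun m n hmn => by
        apply Set.Ioc_subset_Ioc <;>
        · have h1 : (1:ℝ)/(n+1) ≤ 1/(m+1) := by
            apply one_div_le_one_div_of_le (by positivity)
            have := Nat.cast_le (α := ℝ).mpr hmn
            linarith
          linarith)
      ⟨0, measure_ne_top _ _⟩
    rwa [hiInter, hc] at this
  rw [Metric.tendsto_nhds]
  intro ε hε
  have hev := key.eventually_lt_const (ENNReal.ofReal_pos.mpr hε)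
  obtain ⟨n, hn⟩ := hev.exists
  refine Metric.eventually_nhds_iff.mpr ⟨1/(n+1), by positivity, ?_⟩
  intro y hy
  rw [Real.dist_eq] at hy
  have hsub : Set.Ioc (min y c) (max y c) ⊆ Set.Ioc (c - 1/(n+1)) (c + 1/(n+1)) := by
    apply Set.Ioc_subset_Ioc
    · rw [le_min_iff]; cases' abs_lt.mp hy with h1 h2; constructor <;> linarith
    · rw [max_le_iff]; cases' abs_lt.mp hy with h1 h2; constructor <;> linarith
  have hle : (μQ (Set.Ioc (min y c) (max y c))).toReal
      ≤ (μQ (Set.Ioc (c - 1/(n+1)) (c + 1/(n+1)))).toReal := by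
    apply ENNReal.toReal_mono (measure_ne_top _ _) (measure_mono hsub)
  have := ENNReal.toReal_lt_of_lt_ofReal hn
  rw [Real.dist_eq, sub_zero, abs_of_nonneg ENNReal.toReal_nonneg]
  linarith

lemma hasDerivAt_J (hint : ∀ m : ℝ, Integrable (fun q => max (m - q) 0) μQ)
    (c : ℝ) (hc : μQ {c} = 0) :
    HasDerivAt (fun y => ∫ q, max (y - q) 0 ∂μQ) ((μQ (Set.Iic c)).toReal) c := by
  rw [hasDerivAt_iff_tendsto_slope]
  rw [tendsto_iff_dist_tendsto_zero]
  apply squeeze_zero' (Filter.Eventually.of_forall fun y => dist_nonneg)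
  · show ∀ᶠ y in nhdsWithin c {c}ᶜ, dist _ _ ≤ (fun y => (μQ (Set.Ioc (min y c) (max y c))).toReal) y
    filter_upwards [self_mem_nhdsWithin] with y hy
    have hyc : y ≠ c := hy
    have hne : y - c ≠ 0 := sub_ne_zero.mpr hyc
    have hnum := J_num_bound μQ hint c y
    rw [Real.dist_eq]
    have heq : slope (fun y => ∫ q, max (y - q) 0 ∂μQ) c y - (μQ (Set.Iic c)).toReal
        = ((∫ q, max (y - q) 0 ∂μQ) - (∫ q, max (c - q) 0 ∂μQ)
            - (y - c) * (μQ (Set.Iic c)).toReal) / (y - c) := by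
      rw [slope_def_field]
      field_simp
    rw [heq, abs_div, div_le_iff₀ (abs_pos.mpr hne)]
    exact le_trans hnum (le_of_eq (mul_comm _ _))
  · exact (tendsto_B μQ c hc).mono_left nhdsWithin_le_nhds
end



section
variable {A : Type*} [Fintype A] [DecidableEq A]

set_option linter.unusedSectionVars false in
lemma lt_piStar_iff (π : A → ℝ) (A' : Finset A) (h : A'.Nonempty) (r : ℝ) :
    r < piStar π A' ↔ ∃ d ∈ A', r < π d := by
  unfold piStar
  rw [dif_pos h]
  exact Finset.lt_sup'_iff h

set_option linter.unusedSectionVars false in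
lemma le_piStar (π : A → ℝ) (A' : Finset A) (d : A) (hd : d ∈ A') : π d ≤ piStar π A' := by
  unfold piStar
  rw [dif_pos ⟨d, hd⟩]
  exact Finset.le_sup' π hd

lemma layer_sum (π : A → ℝ) (P : A → Finset A → ℝ) (b : A) (hPe : P b ∅ = 0) (t r : ℝ) :
    ∑ A' ∈ (Finset.univ.erase b).powerset,
        P b A' * Set.indicator (Set.Ioo t (piStar π A')) (1 : ℝ → ℝ) r
      = if t < r then
          ∑ A' ∈ (Finset.univ.erase b).powerset.filter
            (fun A' => (A' ∩ (Finset.univ.filter (fun d => r < π d))).Nonempty), P b A'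
        else 0 := by
  by_cases htr : t < r
  · rw [if_pos htr, Finset.sum_filter]
    apply Finset.sum_congr rfl
    intro A' _
    rcases A'.eq_empty_or_nonempty with rfl | hne
    · simp [hPe]
    · have hiff : r < piStar π A' ↔ (A' ∩ (Finset.univ.filter (fun d => r < π d))).Nonempty := by
        rw [lt_piStar_iff π A' hne r]
        constructor
        · rintro ⟨d, hd, hrd⟩
          exact ⟨d, Finset.mem_inter.mpr ⟨hd, Finset.mem_filter.mpr ⟨Finset.mem_univ d, hrd⟩⟩⟩
        · rintro ⟨d, hd⟩
          rw [Finset.mem_inter, Finset.mem_filter] at hd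
          exact ⟨d, hd.1, hd.2.2⟩
      rw [Set.indicator_apply]
      by_cases hr : r < piStar π A'
      · rw [if_pos (Set.mem_Ioo.mpr ⟨htr, hr⟩), if_pos (hiff.mp hr), Pi.one_apply, mul_one]
      · rw [if_neg (fun hm => hr (Set.mem_Ioo.mp hm).2), if_neg (fun hn => hr (hiff.mpr hn)),
          mul_zero]
  · rw [if_neg htr]
    apply Finset.sum_eq_zero
    intro A' _
    rw [Set.indicator_of_notMem (fun hm => htr (Set.mem_Ioo.mp hm).1), mul_zero]

lemma W_repr (π : A → ℝ) (P : A → Finset A → ℝ) (b : A) (t : ℝ) :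
    ∑ A' ∈ (Finset.univ.erase b).powerset, P b A' * max (piStar π A' - t) 0
      = ∫ r : ℝ, ∑ A' ∈ (Finset.univ.erase b).powerset,
          P b A' * Set.indicator (Set.Ioo t (piStar π A')) (1 : ℝ → ℝ) r := by
  rw [integral_finset_sum]
  · apply Finset.sum_congr rfl
    intro A' _
    rw [integral_const_mul, integral_indicator_one measurableSet_Ioo,
      Real.volume_real_Ioo]
  · intro A' _
    exact (((integrable_indicator_iff measurableSet_Ioo).mpr
      (integrableOn_const measure_Ioo_lt_top.ne)).const_mul _)

lemma W_eq (π : A → ℝ) (P : A → Finset A → ℝ)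
    (hA1ii : ∀ a b : A, ∀ S : Finset A, S ⊆ Finset.univ \ {a, b} →
      ∑ A' ∈ (Finset.univ.erase a).powerset.filter (fun A' => (A' ∩ S).Nonempty), P a A'
        = ∑ A' ∈ (Finset.univ.erase b).powerset.filter (fun A' => (A' ∩ S).Nonempty), P b A')
    (hPempty : ∀ a, P a (∅ : Finset A) = 0)
    (b c : A) (t : ℝ) (htb : π b ≤ t) (htc : π c ≤ t) :
    ∑ A' ∈ (Finset.univ.erase b).powerset, P b A' * max (piStar π A' - t) 0
      = ∑ A' ∈ (Finset.univ.erase c).powerset, P c A' * max (piStar π A' - t) 0 := by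
  rw [W_repr, W_repr]
  have heq : (fun r : ℝ => ∑ A' ∈ (Finset.univ.erase b).powerset,
        P b A' * Set.indicator (Set.Ioo t (piStar π A')) (1 : ℝ → ℝ) r)
      = fun r : ℝ => ∑ A' ∈ (Finset.univ.erase c).powerset,
        P c A' * Set.indicator (Set.Ioo t (piStar π A')) (1 : ℝ → ℝ) r := by
    funext r
    rw [layer_sum π P b (hPempty b) t r, layer_sum π P c (hPempty c) t r]
    by_cases htr : t < r
    · rw [if_pos htr, if_pos htr]
      apply hA1ii b c
      intro d hd
      rw [Finset.mem_filter] at hd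
      rw [Finset.mem_sdiff]
      refine ⟨Finset.mem_univ d, ?_⟩
      intro hmem
      rw [Finset.mem_insert, Finset.mem_singleton] at hmem
      rcases hmem with rfl | rfl
      · exact absurd hd.2 (by linarith)
      · exact absurd hd.2 (by linarith)
    · rw [if_neg htr, if_neg htr]
  rw [heq]

end

section
variable {A : Type*} [Fintype A] [DecidableEq A]

lemma gain_le_gain (π : A → ℝ) (P : A → Finset A → ℝ) (μQ : Measure ℝ)
    [IsProbabilityMeasure μQ]
    (hint : ∀ m : ℝ, Integrable (fun q => max (m - q) 0) μQ)
    (hae : ∀ᵐ q ∂μQ, 0 ≤ q)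
    (hPnn : ∀ a A', 0 ≤ P a A')
    (hPempty : ∀ a, P a (∅ : Finset A) = 0)
    (hA1ii : ∀ a b : A, ∀ S : Finset A, S ⊆ Finset.univ \ {a, b} →
      ∑ A' ∈ (Finset.univ.erase a).powerset.filter (fun A' => (A' ∩ S).Nonempty), P a A'
        = ∑ A' ∈ (Finset.univ.erase b).powerset.filter (fun A' => (A' ∩ S).Nonempty), P b A')
    (b c : A) (hcb : π c ≤ π b) :
    gain P μQ π b ≤ gain P μQ π c := by
  unfold gain
  have hrepr : ∀ d : A, ∑ A' ∈ (Finset.univ.erase d).powerset,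
      P d A' * ∫ q, max (piStar π A' - π d - q) 0 ∂μQ
      = ∫ q, ∑ A' ∈ (Finset.univ.erase d).powerset,
          P d A' * max (piStar π A' - π d - q) 0 ∂μQ := by
    intro d
    rw [integral_finset_sum _ (fun A' _ => (hint _).const_mul _)]
    exact Finset.sum_congr rfl fun A' _ => (integral_const_mul _ _).symm
  rw [hrepr b, hrepr c]
  apply integral_mono_ae
  · exact integrable_finset_sum _ (fun A' _ => (hint _).const_mul _)
  · exact integrable_finset_sum _ (fun A' _ => (hint _).const_mul _)
  · filter_upwards [hae] with q hq
    have hsb : ∀ A' : Finset A, piStar π A' - π b - q = piStar π A' - (π b + q) := by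
      intro A'; ring
    have hsc : ∀ A' : Finset A, piStar π A' - π c - q = piStar π A' - (π c + q) := by
      intro A'; ring
    simp only [hsb, hsc]
    calc ∑ A' ∈ (Finset.univ.erase b).powerset, P b A' * max (piStar π A' - (π b + q)) 0
        = ∑ A' ∈ (Finset.univ.erase c).powerset, P c A' * max (piStar π A' - (π b + q)) 0 :=
          W_eq π P hA1ii hPempty b c (π b + q) (by linarith) (by linarith)
      _ ≤ ∑ A' ∈ (Finset.univ.erase c).powerset, P c A' * max (piStar π A' - (π c + q)) 0 := by
          apply Finset.sum_le_sum
          intro A' _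
          exact mul_le_mul_of_nonneg_left (max_le_max (by linarith) le_rfl) (hPnn c A')

lemma gainMin_eq_sel (π : A → ℝ) (P : A → Finset A → ℝ) (μQ : Measure ℝ)
    [IsProbabilityMeasure μQ]
    (hint : ∀ m : ℝ, Integrable (fun q => max (m - q) 0) μQ)
    (hae : ∀ᵐ q ∂μQ, 0 ≤ q)
    (hPnn : ∀ a A', 0 ≤ P a A')
    (hPempty : ∀ a, P a (∅ : Finset A) = 0)
    (hA1ii : ∀ a b : A, ∀ S : Finset A, S ⊆ Finset.univ \ {a, b} →
      ∑ A' ∈ (Finset.univ.erase a).powerset.filter (fun A' => (A' ∩ S).Nonempty), P a A'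
        = ∑ A' ∈ (Finset.univ.erase b).powerset.filter (fun A' => (A' ∩ S).Nonempty), P b A')
    (A' : Finset A) (hne : A'.Nonempty) (s : A) (hs : s ∈ bStar π A') :
    gainMin P μQ π A' = gain P μQ π s := by
  have hsA : s ∈ A' ∧ π s = piStar π A' := by
    simpa [bStar, Finset.mem_filter] using hs
  unfold gainMin
  rw [dif_pos hne]
  apply le_antisymm
  · exact Finset.inf'_le _ hsA.1
  · apply Finset.le_inf'
    intro c hc
    apply gain_le_gain π P μQ hint hae hPnn hPempty hA1ii
    rw [hsA.2]
    exact le_piStar π A' c hc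
end

section
variable {A : Type*} [Fintype A] [DecidableEq A]

set_option linter.unusedSectionVars false in
lemma piStar_eventually (π Δπ : A → ℝ) (A' : Finset A)
    (hcard : (bStar π A').card = 1) (b₀ : A) (hb₀ : b₀ ∈ bStar π A') :
    ∀ᶠ t in nhds (0:ℝ), piStar (π + t • Δπ) A' = π b₀ + t * Δπ b₀ := by
  obtain ⟨a0, ha0⟩ := Finset.card_eq_one.mp hcard
  have hbeq : bStar π A' = {b₀} := by
    rw [ha0] at hb₀ ⊢
    rw [Finset.mem_singleton] at hb₀
    rw [hb₀]
  have hb₀' := Finset.mem_filter.mp hb₀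
  have hb₀A : b₀ ∈ A' := hb₀'.1
  have hπb₀ : π b₀ = piStar π A' := hb₀'.2
  have hne : A'.Nonempty := ⟨b₀, hb₀A⟩
  have hev : ∀ᶠ t in nhds (0:ℝ), ∀ d ∈ A', π d + t * Δπ d ≤ π b₀ + t * Δπ b₀ := by
    rw [Finset.eventually_all]
    intro d hd
    by_cases hdb : d = b₀
    · subst hdb
      exact Filter.Eventually.of_forall (fun t => le_rfl)
    · have hlt : π d < π b₀ := by
        refine lt_of_le_of_ne (hπb₀ ▸ le_piStar π A' d hd) ?_
        intro heq
        apply hdb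
        have hdmem : d ∈ bStar π A' :=
          Finset.mem_filter.mpr ⟨hd, heq.trans hπb₀⟩
        rw [hbeq, Finset.mem_singleton] at hdmem
        exact hdmem
      have hcont1 : ContinuousAt (fun t : ℝ => π d + t * Δπ d) 0 :=
        (continuous_const.add (continuous_id.mul continuous_const)).continuousAt
      have hcont2 : ContinuousAt (fun t : ℝ => π b₀ + t * Δπ b₀) 0 :=
        (continuous_const.add (continuous_id.mul continuous_const)).continuousAt
      have := hcont1.eventually_lt hcont2 (by simpa using hlt)
      exact this.mono fun t ht => ht.le
  filter_upwards [hev] with t ht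
  have happ : (π + t • Δπ) = fun d => π d + t * Δπ d := by
    funext d
    simp [smul_eq_mul]
  have hps : piStar (π + t • Δπ) A' = A'.sup' hne (fun d => π d + t * Δπ d) := by
    unfold piStar
    rw [dif_pos hne, happ]
  rw [hps]
  exact le_antisymm (Finset.sup'_le _ _ ht) (Finset.le_sup' (f := fun d => π d + t * Δπ d) hb₀A)

lemma hasDeriv_term (μQ : Measure ℝ) [IsProbabilityMeasure μQ]
    (hint : ∀ m : ℝ, Integrable (fun q => max (m - q) 0) μQ)
    (π Δπ : A → ℝ) (a : A) (A' : Finset A)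
    (hcard : (bStar π A').card = 1) (hnull : μQ {piStar π A' - π a} = 0)
    (b₀ : A) (hb₀ : b₀ ∈ bStar π A') :
    HasDerivWithinAt
      (fun t : ℝ => ∫ q, max (piStar (π + t • Δπ) A' - (π a + t * Δπ a) - q) 0 ∂μQ)
      ((μQ (Set.Iic (piStar π A' - π a))).toReal * (Δπ b₀ - Δπ a)) (Set.Ici 0) 0 := by
  set c₀ := piStar π A' - π a with hc₀
  set δ := Δπ b₀ - Δπ a with hδ
  have hJ : HasDerivAt (fun y => ∫ q, max (y - q) 0 ∂μQ) ((μQ (Set.Iic c₀)).toReal) c₀ :=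
    hasDerivAt_J μQ hint c₀ hnull
  have haff : HasDerivWithinAt (fun t : ℝ => c₀ + t * δ) δ (Set.Ici 0) 0 := by
    simpa using (((hasDerivAt_id (0:ℝ)).mul_const δ).const_add c₀).hasDerivWithinAt
  have h0 : (fun t : ℝ => c₀ + t * δ) 0 = c₀ := by simp
  have hcomp : HasDerivWithinAt (fun t : ℝ => ∫ q, max ((c₀ + t * δ) - q) 0 ∂μQ)
      ((μQ (Set.Iic c₀)).toReal * δ) (Set.Ici 0) 0 := by
    have := HasDerivAt.comp_hasDerivWithinAt (x := (0:ℝ)) (h0 ▸ hJ) haff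
    simpa [Function.comp_def] using this
  apply hcomp.congr_of_eventuallyEq
  · have hev := piStar_eventually π Δπ A' hcard b₀ hb₀
    have hπb₀ : π b₀ = piStar π A' := (Finset.mem_filter.mp hb₀).2
    filter_upwards [nhdsWithin_le_nhds hev] with t ht
    rw [ht]
    congr 1
    funext q
    rw [hπb₀, hc₀, hδ]
    ring_nf
  · have hπb₀ : π b₀ = piStar π A' := (Finset.mem_filter.mp hb₀).2
    simp [hc₀]

end



/-- δ-passivity of cost-benefit rationalizable dynamics: the map
`t ↦ G(x + tΔx)[π + tΔπ]` has right derivative `H(x)[π] + Δx·Δπ` at `t = 0`. -/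
theorem stmt10 {A : Type*} [Fintype A] [DecidableEq A] [Nonempty A]
    (P : A → Finset A → ℝ) (μQ : Measure ℝ) [IsProbabilityMeasure μQ]
    (hPnn : ∀ a A', 0 ≤ P a A')
    (hPsupp : ∀ a A', ¬ A' ⊆ Finset.univ.erase a → P a A' = 0)
    (hPempty : ∀ a, P a (∅ : Finset A) = 0)
    (hPsum : ∀ a, ∑ A' ∈ (Finset.univ.erase a).powerset, P a A' = 1)
    -- Assumption Q1
    (hQ1a : ∀ q : ℝ, q < 0 → Qfun μQ q = 0)
    (hQ1b : ∀ q : ℝ, 0 < q → 0 < Qfun μQ q)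
    -- Assumption A1-i
    (hA1i : ∀ a b : A, b ≠ a →
      0 < ∑ A' ∈ (Finset.univ.erase a).powerset.filter (fun A' => b ∈ A'), P a A')
    -- Assumption A1-ii
    (hA1ii : ∀ a b : A, ∀ S : Finset A, S ⊆ Finset.univ \ {a, b} →
      ∑ A' ∈ (Finset.univ.erase a).powerset.filter (fun A' => (A' ∩ S).Nonempty), P a A'
        = ∑ A' ∈ (Finset.univ.erase b).powerset.filter (fun A' => (A' ∩ S).Nonempty), P b A')
    (π : A → ℝ)
    -- the regularity condition at `(a, π)` for every `a`
    (hreg : ∀ a : A, ∀ A' ∈ (Finset.univ.erase a).powerset, A'.Nonempty → 0 < P a A' →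
      (bStar π A').card = 1 ∧ μQ {piStar π A' - π a} = 0)
    (x : A → ℝ) (hx : x ∈ stdSimplex ℝ A)
    (sel : A → Finset A → A)
    (hsel : ∀ a : A, ∀ A' ∈ (Finset.univ.erase a).powerset, A'.Nonempty →
      sel a A' ∈ bStar π A')
    (Δπ : A → ℝ) :
    HasDerivWithinAt
      (fun t : ℝ => Gagg P μQ (x + t • deltaX P μQ π x sel) (π + t • Δπ))
      (Hagg P μQ x π + ∑ b : A, deltaX P μQ π x sel b * Δπ b)
      (Set.Ici (0 : ℝ)) 0 := by
  have hint : ∀ m : ℝ, Integrable (fun q => max (m - q) 0) μQ := int_max μQ hQ1a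
  have hae : ∀ᵐ q ∂μQ, 0 ≤ q := ae_nonneg μQ hQ1a
  set Δx := deltaX P μQ π x sel with hΔx
  -- rewrite the function as an explicit double sum
  have hGagg : (fun t : ℝ => Gagg P μQ (x + t • Δx) (π + t • Δπ))
      = fun t : ℝ => ∑ a : A, (x a + t * Δx a) *
          (∑ A' ∈ (Finset.univ.erase a).powerset,
            P a A' * ∫ q, max (piStar (π + t • Δπ) A' - (π a + t * Δπ a) - q) 0 ∂μQ) := by
    funext t
    unfold Gagg gain
    simp only [Pi.add_apply, Pi.smul_apply, smul_eq_mul]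
  rw [hGagg]
  -- derivative of each integral term
  have hterm : ∀ a : A, ∀ A' ∈ (Finset.univ.erase a).powerset,
      HasDerivWithinAt
        (fun t : ℝ => P a A' * ∫ q, max (piStar (π + t • Δπ) A' - (π a + t * Δπ a) - q) 0 ∂μQ)
        (P a A' * (Qfun μQ (piStar π A' - π a) * (Δπ (sel a A') - Δπ a)))
        (Set.Ici 0) 0 := by
    intro a A' hA'
    rcases eq_or_lt_of_le (hPnn a A') with h0 | hpos
    · simp only [← h0, zero_mul]
      exact hasDerivWithinAt_const _ _ 0
    · have hne : A'.Nonempty := by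
        rcases A'.eq_empty_or_nonempty with rfl | h
        · rw [hPempty a] at hpos; exact absurd hpos (lt_irrefl 0)
        · exact h
      obtain ⟨hcard, hnull⟩ := hreg a A' hA' hne hpos
      have hb₀ := hsel a A' hA' hne
      exact (hasDeriv_term μQ hint π Δπ a A' hcard hnull (sel a A') hb₀).const_mul (P a A')
  -- derivative of each a-summand
  have hprod : ∀ a : A,
      HasDerivWithinAt
        (fun t : ℝ => (x a + t * Δx a) *
          (∑ A' ∈ (Finset.univ.erase a).powerset,
            P a A' * ∫ q, max (piStar (π + t • Δπ) A' - (π a + t * Δπ a) - q) 0 ∂μQ))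
        (Δx a * gain P μQ π a
          + x a * ∑ A' ∈ (Finset.univ.erase a).powerset,
              P a A' * (Qfun μQ (piStar π A' - π a) * (Δπ (sel a A') - Δπ a)))
        (Set.Ici 0) 0 := by
    intro a
    have hlin : HasDerivWithinAt (fun t : ℝ => x a + t * Δx a) (Δx a) (Set.Ici 0) 0 := by
      simpa using (((hasDerivAt_id (0:ℝ)).mul_const (Δx a)).const_add (x a)).hasDerivWithinAt
    have hGa : HasDerivWithinAt
        (fun t : ℝ => ∑ A' ∈ (Finset.univ.erase a).powerset,
          P a A' * ∫ q, max (piStar (π + t • Δπ) A' - (π a + t * Δπ a) - q) 0 ∂μQ)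
        (∑ A' ∈ (Finset.univ.erase a).powerset,
          P a A' * (Qfun μQ (piStar π A' - π a) * (Δπ (sel a A') - Δπ a)))
        (Set.Ici 0) 0 := HasDerivWithinAt.fun_sum (fun A' hA' => hterm a A' hA')
    have := hlin.fun_mul hGa
    have hval : (∑ A' ∈ (Finset.univ.erase a).powerset,
          P a A' * ∫ q, max (piStar (π + (0:ℝ) • Δπ) A' - (π a + (0:ℝ) * Δπ a) - q) 0 ∂μQ)
        = gain P μQ π a := by
      unfold gain
      simp only [zero_smul, add_zero, zero_mul]
    rw [hval] at this
    simpa using this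
  have hsum := HasDerivWithinAt.fun_sum (fun a (_ : a ∈ Finset.univ) => hprod a)
  convert hsum using 1
  · rfl
  · rfl
  -- final algebra
  have hswap : ∀ f : A → ℝ, ∑ b : A, Δx b * f b
      = ∑ a : A, x a * ∑ A' ∈ (Finset.univ.erase a).powerset,
          P a A' * Qfun μQ (piStar π A' - π a) * (f (sel a A') - f a) := by
    intro f
    rw [hΔx]
    unfold deltaX
    simp only [Finset.sum_mul]
    rw [Finset.sum_comm]
    apply Finset.sum_congr rfl
    intro a _
    simp only [mul_assoc]
    rw [← Finset.mul_sum]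
    congr 1
    simp only [Finset.sum_mul]
    rw [Finset.sum_comm]
    apply Finset.sum_congr rfl
    intro A' _
    simp only [mul_assoc]
    rw [← Finset.mul_sum]
    congr 1
    rw [← Finset.mul_sum]
    congr 1
    simp [sub_mul, Finset.sum_sub_distrib, ite_mul, Finset.sum_ite_eq']
  have hkey : ∀ a : A, ∀ A' ∈ (Finset.univ.erase a).powerset,
      P a A' * Qfun μQ (piStar π A' - π a) * (gain P μQ π (sel a A') - gain P μQ π a)
        = P a A' * Qfun μQ (piStar π A' - π a) * (gainMin P μQ π A' - gain P μQ π a) := by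
    intro a A' hA'
    rcases eq_or_lt_of_le (hPnn a A') with h0 | hpos
    · rw [← h0]; ring
    · have hne : A'.Nonempty := by
        rcases A'.eq_empty_or_nonempty with rfl | h
        · rw [hPempty a] at hpos; exact absurd hpos (lt_irrefl 0)
        · exact h
      rw [gainMin_eq_sel π P μQ hint hae hPnn hPempty hA1ii A' hne (sel a A') (hsel a A' hA' hne)]
  rw [Finset.sum_add_distrib]
  congr 1
  · -- Hagg = Σ_a Δx a * gain a
    rw [hswap (fun b => gain P μQ π b)]
    unfold Hagg gain2
    apply Finset.sum_congr rfl
    intro a _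
    congr 1
    exact (Finset.sum_congr rfl (hkey a)).symm
  · -- Σ_b Δx b * Δπ b = Σ_a x a * (Σ_{A'} P * (Q * (Δπ sel - Δπ a)))
    rw [hswap Δπ]
    apply Finset.sum_congr rfl
    intro a _
    congr 1
    apply Finset.sum_congr rfl
    intro A' _
    ring
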